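/- Let (V; ρ, μ, ν) be a representation of a post-Lie algebra (g, [·,·], ▷), and let Der(g,V) = {f ∈ Hom(g,V) | f([x,y]) = ρ(x)f(y) − ρ(y)f(x)}. Define ρ̂: g → End(Der(g,V)) by (ρ̂(x)(f))(y) := μ(x)f(y) + ν(y)f(x) − f(x▷y). Then for every x, ρ̂(x) maps Der(g,V) into itself, and ρ̂ is a representation of the sub-adjacent Lie algebra (g, [·,·]_C) on Der(g,V): ρ̂([x,y]_C) = ρ̂(x)∘ρ̂(y) − ρ̂(y)∘ρ̂(x). -/
import Mathlib


/-- ρ̂(x)(f)(y) = μ(x)f(y) + ν(y)f(x) − f(x▷y) preserves Der(g,V) and defines a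
representation of the sub-adjacent Lie algebra on Der(g,V). -/
theorem postLie_rep_on_derivations {K : Type*} [Field K] [CharZero K]
    {g : Type*} [LieRing g] [LieAlgebra K g]
    {V : Type*} [AddCommGroup V] [Module K V]
    (t : g →ₗ[K] g →ₗ[K] g)
    (hpost1 : ∀ x y z : g, t x ⁅y, z⁆ = ⁅t x y, z⁆ + ⁅y, t x z⁆)
    (hpost2 : ∀ x y z : g,
      t ⁅x, y⁆ z = t x (t y z) - t (t x y) z - t y (t x z) + t (t y x) z)
    (ρ μ ν : g →ₗ[K] V →ₗ[K] V)
    (hρ : ∀ (x y : g) (v : V), ρ ⁅x, y⁆ v = ρ x (ρ y v) - ρ y (ρ x v))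
    (h1 : ∀ (x y : g) (v : V), ρ (t x y) v = μ x (ρ y v) - ρ y (μ x v))
    (h2 : ∀ (x y : g) (v : V), ν ⁅x, y⁆ v = ρ x (ν y v) - ρ y (ν x v))
    (h3 : ∀ (x y : g) (v : V),
      μ ⁅x, y⁆ v = μ x (μ y v) - μ (t x y) v - μ y (μ x v) + μ (t y x) v)
    (h4 : ∀ (x y : g) (v : V),
      ν y (ρ x v) = μ x (ν y v) - ν y (μ x v) - ν (t x y) v + ν y (ν x v))
    (hat : g → (g → V) → (g → V))
    (hhat : ∀ (x : g) (f : g → V) (y : g),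
      hat x f y = μ x (f y) + ν y (f x) - f (t x y)) :
    (∀ (x : g) (f : g →ₗ[K] V),
      (∀ a b : g, f ⁅a, b⁆ = ρ a (f b) - ρ b (f a)) →
      ∀ a b : g, hat x ⇑f ⁅a, b⁆ = ρ a (hat x ⇑f b) - ρ b (hat x ⇑f a)) ∧
    (∀ (x y : g) (f : g →ₗ[K] V),
      (∀ a b : g, f ⁅a, b⁆ = ρ a (f b) - ρ b (f a)) →
      ∀ z : g, hat (t x y - t y x + ⁅x, y⁆) ⇑f z =
        hat x (hat y ⇑f) z - hat y (hat x ⇑f) z) := by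
  constructor
  · intro x f hf a b
    rw [hhat, hhat, hhat, hf, hpost1, f.map_add, hf, hf, h2,
      h1 x a (f b), h1 x b (f a)]
    simp only [map_sub, map_add]
    abel
  · intro x y f hf z
    simp only [hhat]
    simp only [map_sub, map_add, LinearMap.sub_apply, LinearMap.add_apply, hf,
      hpost2, h3]
    rw [h4 x z (f y), h4 y z (f x)]
    abel
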